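/- (Realizable depth range for binary-tree decompositions of an n-fold product.) For every n ≥ 1 and every natural number h with ⌈log₂ n⌉ ≤ h ≤ n - 1, there exists a binary tree t with exactly n leaves and height exactly h. In particular, the product x₁x₂⋯xₙ can be decomposed as a recursive product of two factors arranged in a binary tree whose number of levels ranges from the minimum ⌈log₂ n⌉ (complete binary tree) to the maximum n - 1 (caterpillar/full-depth tree). -/

import Mathlib

lemma aux_tree : ∀ n h : ℕ, 1 ≤ n → Nat.clog 2 n ≤ h → h ≤ n - 1 →
    ∃ t : Tree Unit, t.numLeaves = n ∧ t.height = h := by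
  intro n
  induction n using Nat.strong_induction_on with
  | _ n ih =>
    intro h hn hc hh
    match h with
    | 0 =>
      have : n ≤ 1 := by
        have := (Nat.clog_le_iff_le_pow (by norm_num : 1 < 2)).mp hc
        simpa using this
      have hn1 : n = 1 := le_antisymm this hn
      exact ⟨Tree.nil, by simp [hn1], by simp⟩
    | hp + 1 =>
      have hn2 : hp + 2 ≤ n := by omega
      have hnle : n ≤ 2 ^ (hp + 1) :=
        (Nat.clog_le_iff_le_pow (by norm_num : 1 < 2)).mp hc
      set a := max (hp + 1) (n - 2 ^ hp) with ha
      have hple : hp + 1 ≤ 2 ^ hp := hp.lt_two_pow_self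
      have han : a ≤ n - 1 := by
        have h1 : hp + 1 ≤ n - 1 := by omega
        have h2 : n - 2 ^ hp ≤ n - 1 := by
          have : 1 ≤ 2 ^ hp := Nat.one_le_two_pow
          omega
        omega
      have ha2 : a ≤ 2 ^ hp := by
        have : n - 2 ^ hp ≤ 2 ^ hp := by
          have : 2 ^ (hp + 1) = 2 ^ hp + 2 ^ hp := by ring
          omega
        omega
      set b := n - a with hb
      have hb1 : 1 ≤ b := by omega
      have hab : a + b = n := by omega
      have hb2 : b ≤ 2 ^ hp := by omega
      have hbpow : b ≤ 2 ^ (b - 1) := by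
        have := (b - 1).lt_two_pow_self
        omega
      obtain ⟨l, hl1, hl2⟩ := ih a (by omega) hp (by omega)
        ((Nat.clog_le_iff_le_pow (by norm_num : 1 < 2)).mpr ha2) (by omega)
      obtain ⟨r, hr1, hr2⟩ := ih b (by omega) (min hp (b - 1)) hb1
        (by
          have c1 : Nat.clog 2 b ≤ hp :=
            (Nat.clog_le_iff_le_pow (by norm_num : 1 < 2)).mpr hb2
          have c2 : Nat.clog 2 b ≤ b - 1 :=
            (Nat.clog_le_iff_le_pow (by norm_num : 1 < 2)).mpr hbpow
          exact le_min c1 c2)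
        (by omega)
      refine ⟨Tree.node () l r, ?_, ?_⟩
      · simp [Tree.numLeaves, hl1, hr1, hab]
      · simp [Tree.height, hl2, hr2]

theorem exists_tree_with_leaves_and_height (n : ℕ) (hn : 1 ≤ n)
    (h : ℕ) (h₁ : Nat.clog 2 n ≤ h) (h₂ : h ≤ n - 1) :
    ∃ t : Tree Unit, t.numLeaves = n ∧ t.height = h :=
  aux_tree n h hn h₁ h₂
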